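/- If ρ ∈ (0,1), then G attains its global minimum over ℝ at y*, i.e. G(y) ≥ G(y*) for all y ∈ ℝ; moreover G(y*) ≤ 0. -/
import Mathlib


open MeasureTheory Real

/-- The standard normal density `φ(u) = (2π)^{-1/2} exp(-u²/2)`. -/
noncomputable def stdNormalPDF (u : ℝ) : ℝ := (Real.sqrt (2 * π))⁻¹ * Real.exp (-u ^ 2 / 2)

/-- The standard normal CDF `Φ(x) = ∫_{-∞}^x φ(u) du`. -/
noncomputable def stdNormalCDF (x : ℝ) : ℝ := ∫ u in Set.Iic x, stdNormalPDF u

/-- `G(y) = Φ(x)Φ(y) − ∫_{−∞}^{y} Φ((x − ρu)/√(1−ρ²)) φ(u) du`. -/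
noncomputable def Gfun (ρ x y : ℝ) : ℝ :=
  stdNormalCDF x * stdNormalCDF y
    - ∫ u in Set.Iic y, stdNormalCDF ((x - ρ * u) / Real.sqrt (1 - ρ ^ 2)) * stdNormalPDF u

/-- `y* = x(1 − √(1−ρ²))/ρ`. -/
noncomputable def ystar (ρ x : ℝ) : ℝ := x * (1 - Real.sqrt (1 - ρ ^ 2)) / ρ

lemma pdf_nonneg (u : ℝ) : 0 ≤ stdNormalPDF u := by
  unfold stdNormalPDF; positivity

lemma pdf_integrable : Integrable stdNormalPDF := by
  have h : Integrable (fun u : ℝ => Real.exp (-(1/2 : ℝ) * u ^ 2)) :=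
    integrable_exp_neg_mul_sq (by norm_num)
  have h2 := h.const_mul (Real.sqrt (2*π))⁻¹
  convert h2 using 2 with u
  unfold stdNormalPDF
  ring_nf

lemma cdf_mono : Monotone stdNormalCDF := fun _ _ hab =>
  setIntegral_mono_set pdf_integrable.integrableOn
    (Filter.Eventually.of_forall pdf_nonneg)
    (HasSubset.Subset.eventuallyLE (Set.Iic_subset_Iic.2 hab))

lemma cdf_nonneg (t : ℝ) : 0 ≤ stdNormalCDF t :=
  setIntegral_nonneg measurableSet_Iic fun u _ => pdf_nonneg u

lemma cdf_le (t : ℝ) : stdNormalCDF t ≤ ∫ u, stdNormalPDF u :=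
  setIntegral_le_integral pdf_integrable (Filter.Eventually.of_forall pdf_nonneg)

lemma cdf_measurable : Measurable stdNormalCDF := cdf_mono.measurable

/-- If `ρ ∈ (0,1)` then `G` attains its global minimum over `ℝ` at
`y*`, i.e. `G(y) ≥ G(y*)` for all `y`; moreover `G(y*) ≤ 0`. -/
theorem stmt6 (ρ x : ℝ) (hρ : ρ ∈ Set.Ioo (0 : ℝ) 1) :
    (∀ y : ℝ, Gfun ρ x (ystar ρ x) ≤ Gfun ρ x y) ∧ Gfun ρ x (ystar ρ x) ≤ 0 := by
  obtain ⟨hρ0, hρ1⟩ := hρ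
  set c := Real.sqrt (1 - ρ ^ 2) with hc_def
  have hc : 0 < c := Real.sqrt_pos.2 (by nlinarith)
  set h : ℝ → ℝ := fun u => (stdNormalCDF x - stdNormalCDF ((x - ρ * u) / c)) * stdNormalPDF u
    with hh_def
  -- integrability of h
  have hmeas : Measurable h := by
    apply Measurable.mul
    · exact (measurable_const.sub (cdf_measurable.comp (by fun_prop)))
    · exact (by unfold stdNormalPDF; fun_prop : Continuous stdNormalPDF).measurable
  have hM : Integrable (fun u : ℝ => (∫ v, stdNormalPDF v) * stdNormalPDF u) :=
    pdf_integrable.const_mul _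
  have hInt : Integrable h := by
    refine hM.mono' hmeas.aestronglyMeasurable (Filter.Eventually.of_forall fun u => ?_)
    have h1 : |stdNormalCDF x - stdNormalCDF ((x - ρ * u) / c)| ≤ ∫ v, stdNormalPDF v := by
      rw [abs_sub_le_iff]
      constructor <;> nlinarith [cdf_nonneg x, cdf_nonneg ((x - ρ*u)/c), cdf_le x,
        cdf_le ((x - ρ*u)/c)]
    have : ‖h u‖ = |stdNormalCDF x - stdNormalCDF ((x - ρ * u) / c)| * stdNormalPDF u := by
      rw [hh_def]; simp [abs_mul, abs_of_nonneg (pdf_nonneg u)]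
    rw [this]
    exact mul_le_mul_of_nonneg_right h1 (pdf_nonneg u)
  -- G as integral of h
  have hInt2 : Integrable (fun u : ℝ => stdNormalCDF ((x - ρ * u) / c) * stdNormalPDF u) := by
    have : (fun u : ℝ => stdNormalCDF ((x - ρ * u) / c) * stdNormalPDF u)
        = fun u => stdNormalCDF x * stdNormalPDF u - h u := by
      funext u; rw [hh_def]; ring
    rw [this]
    exact (pdf_integrable.const_mul _).sub hInt
  have hG : ∀ y : ℝ, Gfun ρ x y = ∫ u in Set.Iic y, h u := by
    intro y
    rw [Gfun, show stdNormalCDF x * stdNormalCDF y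
        = ∫ u in Set.Iic y, stdNormalCDF x * stdNormalPDF u from (integral_const_mul _ _).symm,
      ← integral_sub ((pdf_integrable.const_mul _).integrableOn) hInt2.integrableOn]
    simp only [hh_def, hc_def, sub_mul]
  -- sign of h
  have hxy : x - ρ * ystar ρ x = x * c := by
    rw [ystar]; field_simp; ring
  have hsign_le : ∀ u ≤ ystar ρ x, h u ≤ 0 := by
    intro u hu
    rw [hh_def]
    apply mul_nonpos_of_nonpos_of_nonneg _ (pdf_nonneg u)
    rw [sub_nonpos]
    apply cdf_mono
    rw [le_div_iff₀ hc]
    nlinarith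
  have hsign_ge : ∀ u, ystar ρ x ≤ u → 0 ≤ h u := by
    intro u hu
    rw [hh_def]
    apply mul_nonneg _ (pdf_nonneg u)
    rw [sub_nonneg]
    apply cdf_mono
    rw [div_le_iff₀ hc]
    nlinarith
  constructor
  · intro y
    rw [hG, hG, ← sub_nonneg,
      intervalIntegral.integral_Iic_sub_Iic hInt.integrableOn hInt.integrableOn]
    rcases le_total (ystar ρ x) y with hy | hy
    · rw [intervalIntegral.integral_of_le hy]
      exact setIntegral_nonneg measurableSet_Ioc fun u hu => hsign_ge u hu.1.le
    · rw [intervalIntegral.integral_of_ge hy, neg_nonneg]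
      exact setIntegral_nonpos measurableSet_Ioc fun u hu => hsign_le u hu.2
  · rw [hG]
    exact setIntegral_nonpos measurableSet_Iic fun u hu => hsign_le u hu
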